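/- For a full p-skyline relation ≻ with p-graph Γ, and distinct tuples o ≠ o', the following are equivalent: (1) o ≻ o'; (2) BetIn(o,o') ⊇ Top(o,o'); (3) Ch_Γ(BetIn(o,o')) ⊇ BetIn(o',o), where BetIn(x,y) is the set of attributes on which x is strictly better than y, Top(o,o') is the set of attributes where o,o' differ that have no Γ-ancestor among the differing attributes, and Ch_Γ(S) is the set of Γ-children of members of S. -/

import Mathlib

/-- The full p-skyline relation with p-graph `Γ`:
`≻ = TC(⋃_A q_A)`, `q_A = { (o,o') : o.A >_A o'.A ∧ o,o' agree outside Ch_Γ(A) ∪ {A} }`. -/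
def pskyRel {ι : Type*} {D : ι → Type*} [∀ i, LinearOrder (D i)]
    (Γ : ι → ι → Prop) : (∀ i, D i) → (∀ i, D i) → Prop :=
  Relation.TransGen
    (fun o o' => ∃ A : ι, o' A < o A ∧ ∀ B : ι, ¬ Γ A B → B ≠ A → o B = o' B)

section Aux

variable {ι : Type*} {D : ι → Type*} [∀ i, LinearOrder (D i)]
  {Γ : ι → ι → Prop}

/-- Soundness: `o ≻ o'` implies condition (3). -/
lemma psky_sound_aux (hwf : WellFounded Γ)
    (htr : ∀ a b c, Γ a b → Γ b c → Γ a c)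
    {x y : ∀ i, D i} (h : pskyRel (D := D) Γ x y) :
    ∀ A : ι, x A < y A → ∃ C : ι, y C < x C ∧ Γ C A := by
  induction h using Relation.TransGen.trans_induction_on with
  | single hab =>
    intro A hA
    obtain ⟨A0, hlt, hag⟩ := hab
    refine ⟨A0, hlt, ?_⟩
    by_contra hΓ
    rcases eq_or_ne A A0 with rfl | hAne
    · exact absurd hlt (not_lt.mpr hA.le)
    · exact absurd (hag A hΓ hAne) (ne_of_lt hA)
  | @trans a b c hab hbc ihab ihbc =>
    have key : ∀ A : ι, (a A < b A ∨ b A < c A) →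
        ∃ C : ι, c C < a C ∧ Γ C A := by
      intro A
      refine hwf.induction (C := fun A => (a A < b A ∨ b A < c A) →
        ∃ C : ι, c C < a C ∧ Γ C A) A ?_
      intro A ih hA
      rcases hA with h1 | h2
      · obtain ⟨C1, hC1, hΓ1⟩ := ihab A h1
        by_cases hca : c C1 < a C1
        · exact ⟨C1, hca, hΓ1⟩
        · have : b C1 < c C1 := lt_of_lt_of_le hC1 (not_lt.mp hca)
          obtain ⟨C, hC, hΓ⟩ := ih C1 hΓ1 (Or.inr this)
          exact ⟨C, hC, htr _ _ _ hΓ hΓ1⟩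
      · obtain ⟨C1, hC1, hΓ1⟩ := ihbc A h2
        by_cases hca : c C1 < a C1
        · exact ⟨C1, hca, hΓ1⟩
        · have : a C1 < b C1 := lt_of_le_of_lt (not_lt.mp hca) hC1
          obtain ⟨C, hC, hΓ⟩ := ih C1 hΓ1 (Or.inl this)
          exact ⟨C, hC, htr _ _ _ hΓ hΓ1⟩
    intro A hA
    apply key
    rcases lt_or_ge (a A) (b A) with h | h
    · exact Or.inl h
    · exact Or.inr (lt_of_le_of_lt h hA)

/-- Completeness: condition (3) implies `o ≻ o'` (for distinct tuples). -/
lemma psky_complete_aux [Fintype ι] (hwf : WellFounded Γ)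
    (htr : ∀ a b c, Γ a b → Γ b c → Γ a c) :
    ∀ n : ℕ, ∀ o o' : ∀ i, D i,
      (Finset.univ.filter (fun B => o B ≠ o' B)).card ≤ n →
      o ≠ o' →
      (∀ A : ι, o A < o' A → ∃ C : ι, o' C < o C ∧ Γ C A) →
      pskyRel (D := D) Γ o o' := by
  classical
  intro n
  induction n with
  | zero =>
    intro o o' hcard hne _
    exfalso
    apply hne
    funext B
    by_contra hB
    have : B ∈ Finset.univ.filter (fun B => o B ≠ o' B) := by
      simp [hB]
    have := Finset.card_pos.mpr ⟨B, this⟩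
    omega
  | succ n ihn =>
    intro o o' hcard hne h3
    obtain ⟨B0, hB0⟩ := Function.ne_iff.mp hne
    obtain ⟨A, hAmem, hAmin⟩ := hwf.has_min {B | o B ≠ o' B} ⟨B0, hB0⟩
    -- `A` differs, and no differing attribute is a Γ-parent of `A`.
    have hA : o' A < o A := by
      rcases (hAmem : o A ≠ o' A).lt_or_gt with h | h
      · obtain ⟨C, hC, hΓ⟩ := h3 A h
        exact absurd hΓ (hAmin C (ne_of_gt hC))
      · exact h
    set o₁ : ∀ i, D i := fun B => if Γ A B ∨ B = A then o B else o' B with ho₁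
    have ho₁A : o₁ A = o A := by simp [ho₁]
    have ho₁out : ∀ B, ¬ Γ A B → B ≠ A → o₁ B = o' B := by
      intro B h1 h2
      simp only [ho₁]
      rw [if_neg (by tauto)]
    have hstep : (fun x y => ∃ A : ι, y A < x A ∧
        ∀ B : ι, ¬ Γ A B → B ≠ A → x B = y B) o₁ o' :=
      ⟨A, by rw [ho₁A]; exact hA, ho₁out⟩
    by_cases heq : o = o₁
    · exact Relation.TransGen.single (heq ▸ hstep)
    · have hin : ∀ B, o B ≠ o₁ B → (¬ (Γ A B ∨ B = A)) ∧ o B ≠ o' B := by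
        intro B hB
        have hn : ¬ (Γ A B ∨ B = A) := by
          intro h
          apply hB
          simp [ho₁, if_pos h]
        refine ⟨hn, ?_⟩
        intro h
        apply hB
        simp only [ho₁, if_neg hn]
        exact h
      have hsub : Finset.univ.filter (fun B => o B ≠ o₁ B) ⊆
          (Finset.univ.filter (fun B => o B ≠ o' B)).erase A := by
        intro B hB
        simp only [Finset.mem_filter, Finset.mem_univ, true_and] at hB
        obtain ⟨hn, hd⟩ := hin B hB
        simp only [Finset.mem_erase, Finset.mem_filter, Finset.mem_univ, true_and]
        exact ⟨fun h => hn (Or.inr h), hd⟩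
      have hAmem' : A ∈ Finset.univ.filter (fun B => o B ≠ o' B) := by
        simp only [Finset.mem_filter, Finset.mem_univ, true_and]
        exact hAmem
      have hcard' : (Finset.univ.filter (fun B => o B ≠ o₁ B)).card ≤ n := by
        have h1 := Finset.card_le_card hsub
        rw [Finset.card_erase_of_mem hAmem'] at h1
        omega
      have h3' : ∀ B : ι, o B < o₁ B → ∃ C : ι, o₁ C < o C ∧ Γ C B := by
        intro B hB
        obtain ⟨hn, _⟩ := hin B (ne_of_lt hB)
        have hBo' : o₁ B = o' B := by simp only [ho₁, if_neg hn]
        rw [hBo'] at hB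
        obtain ⟨C, hC, hΓ⟩ := h3 B hB
        have hnC : ¬ (Γ A C ∨ C = A) := by
          rintro (h | rfl)
          · exact hn (Or.inl (htr _ _ _ h hΓ))
          · exact hn (Or.inl hΓ)
        refine ⟨C, ?_, hΓ⟩
        simp only [ho₁, if_neg hnC]
        exact hC
      exact (ihn o o₁ hcard' heq h3').tail hstep

end Aux

/-- dominance testing.  For distinct tuples `o ≠ o'`, each of the
following is equivalent to `o ≻ o'`:
(2) every attribute on which `o,o'` differ and that has no Γ-ancestor among the
differing attributes is one where `o` is better (`Top(o,o') ⊆ BetIn(o,o')`);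
(3) every attribute on which `o'` is better is a Γ-child of an attribute on
which `o` is better (`BetIn(o',o) ⊆ Ch_Γ(BetIn(o,o'))`). -/
theorem pskyline_dominance_testing {ι : Type*} [Fintype ι]
    {D : ι → Type*} [∀ i, LinearOrder (D i)]
    (Γ : ι → ι → Prop)
    (hirr : ∀ a, ¬ Γ a a)
    (htr : ∀ a b c, Γ a b → Γ b c → Γ a c)
    (henv : ∀ a b c d : ι, a ≠ b → a ≠ c → a ≠ d → b ≠ c → b ≠ d → c ≠ d →
      Γ a b → Γ c d → Γ c b → (Γ c a ∨ Γ a d ∨ Γ d b))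
    (o o' : ∀ i, D i) (hne : o ≠ o') :
    (pskyRel (D := D) Γ o o' ↔
      ∀ A : ι, (o A ≠ o' A ∧ ¬ ∃ B : ι, o B ≠ o' B ∧ Γ B A) → o' A < o A) ∧
    (pskyRel (D := D) Γ o o' ↔
      ∀ A : ι, o A < o' A → ∃ C : ι, o' C < o C ∧ Γ C A) := by
  classical
  have hwf : WellFounded Γ := by
    haveI : IsTrans ι Γ := ⟨fun a b c => htr a b c⟩
    haveI : IsIrrefl ι Γ := ⟨hirr⟩
    exact Finite.wellFounded_of_trans_of_irrefl Γ
  -- (3) → (2)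
  have h32 : (∀ A : ι, o A < o' A → ∃ C : ι, o' C < o C ∧ Γ C A) →
      ∀ A : ι, (o A ≠ o' A ∧ ¬ ∃ B : ι, o B ≠ o' B ∧ Γ B A) → o' A < o A := by
    intro h3 A ⟨hd, htop⟩
    rcases hd.lt_or_gt with h | h
    · obtain ⟨C, hC, hΓ⟩ := h3 A h
      exact absurd ⟨C, ne_of_gt hC, hΓ⟩ htop
    · exact h
  -- (2) → (3)
  have h23 : (∀ A : ι, (o A ≠ o' A ∧ ¬ ∃ B : ι, o B ≠ o' B ∧ Γ B A) → o' A < o A) →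
      ∀ A : ι, o A < o' A → ∃ C : ι, o' C < o C ∧ Γ C A := by
    intro h2 A hA
    obtain ⟨B, hBmem, hBmin⟩ :=
      hwf.has_min {B | o B ≠ o' B ∧ (Γ B A ∨ B = A)} ⟨A, ne_of_lt hA, Or.inr rfl⟩
    obtain ⟨hBd, hBA⟩ := hBmem
    have hBtop : ¬ ∃ C : ι, o C ≠ o' C ∧ Γ C B := by
      rintro ⟨C, hCd, hΓ⟩
      refine hBmin C ⟨hCd, ?_⟩ hΓ
      rcases hBA with h | rfl
      · exact Or.inl (htr _ _ _ hΓ h)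
      · exact Or.inl hΓ
    have hBlt := h2 B ⟨hBd, hBtop⟩
    rcases hBA with h | rfl
    · exact ⟨B, hBlt, h⟩
    · exact absurd hA (not_lt.mpr hBlt.le)
  have hiff3 : pskyRel (D := D) Γ o o' ↔
      ∀ A : ι, o A < o' A → ∃ C : ι, o' C < o C ∧ Γ C A := by
    constructor
    · exact fun h => psky_sound_aux hwf htr h
    · intro h3
      exact psky_complete_aux hwf htr
        (Finset.univ.filter (fun B => o B ≠ o' B)).card o o' le_rfl hne h3
  refine ⟨?_, hiff3⟩
  rw [hiff3]
  exact ⟨h32, h23⟩
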